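/- For 0 < α < 1, x > 0 and y > 0, the inequality E_α((x+y)^α) < E_α(x^α) · E_α(y^α) is strict. -/

import Mathlib

noncomputable def mittagLeffler (α x : ℝ) : ℝ :=
  ∑' k : ℕ, x ^ k / Real.Gamma (α * k + 1)

open Finset intervalIntegral MeasureTheory Filter


lemma beta_scaled {p q T : ℝ} (hp : 0 < p) (hq : 0 < q) (hT : 0 < T) :
    ∫ s in (0:ℝ)..T, s ^ (p-1) * (T - s) ^ (q-1)
      = Real.Gamma p * Real.Gamma q / Real.Gamma (p+q) * T ^ (p+q-1) := by
  have hpq : 0 < p + q := by linarith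
  have hG : (0:ℝ) < Real.Gamma (p+q) := Real.Gamma_pos_of_pos hpq
  have key := Complex.betaIntegral_scaled (p:ℂ) (q:ℂ) hT
  have h2 := Complex.Gamma_mul_Gamma_eq_betaIntegral (s := (p:ℂ)) (t := (q:ℂ))
    (by simpa using hp) (by simpa using hq)
  have hcast : ((p:ℂ) + q) = ((p+q : ℝ) : ℂ) := by push_cast; ring
  rw [hcast, Complex.Gamma_ofReal, Complex.Gamma_ofReal, Complex.Gamma_ofReal] at h2
  have hGne : ((Real.Gamma (p+q) : ℝ) : ℂ) ≠ 0 := by exact_mod_cast hG.ne'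
  have hB : Complex.betaIntegral p q = ((Real.Gamma p * Real.Gamma q / Real.Gamma (p+q) : ℝ) : ℂ) := by
    push_cast
    rw [eq_div_iff hGne]
    linear_combination -h2
  have hint : (∫ s in (0:ℝ)..T, ((s:ℂ)) ^ ((p:ℂ) - 1) * ((T:ℂ) - s) ^ ((q:ℂ) - 1))
      = ((∫ s in (0:ℝ)..T, s ^ (p-1) * (T - s) ^ (q-1) : ℝ) : ℂ) := by
    rw [← intervalIntegral.integral_ofReal]
    refine intervalIntegral.integral_congr fun s hs => ?_
    rw [Set.uIcc_of_le hT.le] at hs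
    rw [show ((p:ℂ) - 1) = ((p-1 : ℝ) : ℂ) by push_cast; ring,
      show ((q:ℂ) - 1) = ((q-1 : ℝ) : ℂ) by push_cast; ring,
      show ((T:ℂ) - s) = ((T - s : ℝ) : ℂ) by push_cast; ring,
      ← Complex.ofReal_cpow hs.1, ← Complex.ofReal_cpow (by linarith [hs.2])]
    push_cast; ring
  have hTc : ((T:ℂ)) ^ ((p:ℂ) + q - 1) = ((T ^ (p+q-1) : ℝ) : ℂ) := by
    rw [show ((p:ℂ) + q - 1) = ((p+q-1 : ℝ) : ℂ) by push_cast; ring,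
      ← Complex.ofReal_cpow hT.le]
  rw [hint, hB, hTc] at key
  rw [mul_comm]
  exact_mod_cast key

lemma integrable_aux {p q T : ℝ} (hp : 0 ≤ p) (hq : -1 < q) :
    IntervalIntegrable (fun s => s ^ p * (T - s) ^ q) volume 0 T := by
  have h1 : IntervalIntegrable (fun s : ℝ => (T - s) ^ q) volume 0 T := by
    have := (intervalIntegrable_rpow' (a := T) (b := 0) hq).comp_sub_left T
    simpa using this
  exact h1.continuousOn_mul (Real.continuous_rpow_const hp).continuousOn

noncomputable def gml (α : ℝ) (k : ℕ) (t : ℝ) : ℝ := t ^ (α * k) / Real.Gamma (α * k + 1)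

lemma gml_nonneg {α : ℝ} (hα : 0 < α) (k : ℕ) {t : ℝ} (ht : 0 ≤ t) : 0 ≤ gml α k t := by
  have : 0 < Real.Gamma (α * k + 1) := Real.Gamma_pos_of_pos (by positivity)
  exact div_nonneg (Real.rpow_nonneg ht _) this.le

lemma gml_zero (α : ℝ) (t : ℝ) : gml α 0 t = 1 := by
  simp [gml, Real.Gamma_one]

lemma frac_int {α : ℝ} (hα0 : 0 < α) (k : ℕ) {t : ℝ} (ht : 0 < t) :
    ∫ s in (0:ℝ)..t, s ^ (α * k) * (t - s) ^ (α - 1)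
      = Real.Gamma α * Real.Gamma (α * k + 1) * gml α (k+1) t := by
  have hp : 0 < α * k + 1 := by positivity
  have h := beta_scaled (p := α * k + 1) (q := α) hp hα0 ht
  have e1 : α * k + 1 - 1 = α * k := by ring
  have e2 : α * k + 1 + α = α * (k+1) + 1 := by push_cast; ring
  rw [e1, e2] at h
  have e3 : α * ((k:ℝ)+1) + 1 - 1 = α * ((k:ℝ)+1) := by ring
  rw [e3] at h
  rw [h, gml]
  have hpos : (0:ℝ) < Real.Gamma (α * ((k:ℕ)+1:ℕ) + 1) := Real.Gamma_pos_of_pos (by positivity)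
  push_cast at hpos ⊢
  rw [div_mul_eq_mul_div, mul_div_assoc]
  ring

lemma key {α : ℝ} (hα0 : 0 < α) (hα1 : α < 1) :
    ∀ k : ℕ, ∀ x : ℝ, 0 < x → ∀ y : ℝ, 0 ≤ y →
      gml α k (x + y) ≤ ∑ i ∈ range (k+1), gml α i x * gml α (k-i) y := by
  intro k
  induction k with
  | zero =>
      intro x hx y hy
      simp [gml_zero]
  | succ k ih =>
      intro x hx y hy
      rcases hy.eq_or_lt with rfl | hy
      · have hterm : gml α (k+1) (x+0) = gml α (k+1) x * gml α ((k+1)-(k+1)) 0 := by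
          simp [gml_zero]
        rw [hterm]
        refine Finset.single_le_sum (f := fun i => gml α i x * gml α ((k+1)-i) 0) ?_ (by simp)
        intro i _
        exact mul_nonneg (gml_nonneg hα0 _ hx.le) (gml_nonneg hα0 _ le_rfl)
      · have hxy : 0 < x + y := by linarith
        have hΓα : 0 < Real.Gamma α := Real.Gamma_pos_of_pos hα0
        have hΓk : 0 < Real.Gamma (α * k + 1) := Real.Gamma_pos_of_pos (by positivity)
        have hint_full : IntervalIntegrable (fun s => s ^ (α * k) * (x + y - s) ^ (α - 1)) volume 0 (x+y) :=
          integrable_aux (by positivity) (by linarith)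
        have hint1 : IntervalIntegrable (fun s => s ^ (α * k) * (x + y - s) ^ (α - 1)) volume 0 x :=
          hint_full.mono_set (by
            rw [Set.uIcc_of_le hx.le, Set.uIcc_of_le hxy.le]
            exact Set.Icc_subset_Icc le_rfl (by linarith))
        have hint2 : IntervalIntegrable (fun s => s ^ (α * k) * (x + y - s) ^ (α - 1)) volume x (x+y) :=
          hint_full.mono_set (by
            rw [Set.uIcc_of_le (by linarith : x ≤ x + y), Set.uIcc_of_le hxy.le]
            exact Set.Icc_subset_Icc hx.le le_rfl)
        have hsplit : (∫ s in (0:ℝ)..(x+y), s ^ (α * k) * (x + y - s) ^ (α - 1))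
            = (∫ s in (0:ℝ)..x, s ^ (α * k) * (x + y - s) ^ (α - 1))
              + ∫ s in x..(x+y), s ^ (α * k) * (x + y - s) ^ (α - 1) :=
          (intervalIntegral.integral_add_adjacent_intervals hint1 hint2).symm
        -- A part
        have hA : (∫ s in (0:ℝ)..x, s ^ (α * k) * (x + y - s) ^ (α - 1))
            ≤ ∫ s in (0:ℝ)..x, s ^ (α * k) * (x - s) ^ (α - 1) := by
          refine intervalIntegral.integral_mono_ae_restrict hx.le hint1
            (integrable_aux (by positivity) (by linarith)) ?_
          refine (ae_restrict_iff' measurableSet_Icc).mpr ?_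
          refine MeasureTheory.ae_iff.mpr ?_
          refine measure_mono_null (fun s hs => ?_) (Real.volume_singleton (a := x))
          simp only [Set.mem_setOf_eq, Classical.not_imp] at hs
          obtain ⟨⟨hs0, hsx⟩, hneg⟩ := hs
          simp only [Set.mem_singleton_iff]
          by_contra hne
          apply hneg
          have hsx' : s < x := lt_of_le_of_ne hsx hne
          exact mul_le_mul_of_nonneg_left
            (Real.rpow_le_rpow_of_nonpos (by linarith) (by linarith) (by linarith))
            (Real.rpow_nonneg hs0 _)
        -- B part: translate
        have htrans : (∫ u in (0:ℝ)..y, (x+u) ^ (α * k) * (y - u) ^ (α - 1))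
            = ∫ s in x..(x+y), s ^ (α * k) * (x + y - s) ^ (α - 1) := by
          have h0 := intervalIntegral.integral_comp_add_left (a := (0:ℝ)) (b := y)
            (f := fun s => s ^ (α * k) * (x + y - s) ^ (α - 1)) x
          rw [show x + (0:ℝ) = x by ring] at h0
          rw [← h0]
          refine intervalIntegral.integral_congr fun u hu => ?_
          have e : x + y - (x + u) = y - u := by ring
          simp only [e]
        -- B bound
        have hintB2 : IntervalIntegrable
            (fun u => (Real.Gamma (α*k+1) * ∑ i ∈ range (k+1), gml α i x * gml α (k-i) u) * (y-u)^(α-1))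
            volume 0 y := by
          have hrw : (fun u : ℝ => (Real.Gamma (α*k+1) * ∑ i ∈ range (k+1), gml α i x * gml α (k-i) u) * (y-u)^(α-1))
              = fun u => ∑ i ∈ range (k+1),
                  (Real.Gamma (α*k+1) * gml α i x / Real.Gamma (α*(k-i:ℕ)+1)) * (u^(α*(k-i:ℕ)) * (y-u)^(α-1)) := by
            funext u
            rw [Finset.mul_sum, Finset.sum_mul]
            refine Finset.sum_congr rfl fun i hi => ?_
            simp only [gml]
            ring
          rw [hrw, show (fun u : ℝ => ∑ i ∈ range (k+1),
                  (Real.Gamma (α*k+1) * gml α i x / Real.Gamma (α*(k-i:ℕ)+1)) * (u^(α*(k-i:ℕ)) * (y-u)^(α-1)))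
              = ∑ i ∈ range (k+1), (fun u : ℝ =>
                  (Real.Gamma (α*k+1) * gml α i x / Real.Gamma (α*(k-i:ℕ)+1)) * (u^(α*(k-i:ℕ)) * (y-u)^(α-1)))
            from funext fun u => by rw [Finset.sum_apply]]
          refine IntervalIntegrable.sum _ (fun i _ => ?_)
          exact (integrable_aux (by positivity) (by linarith)).const_mul _
        have hintB1 : IntervalIntegrable (fun u => (x+u) ^ (α * k) * (y - u) ^ (α - 1)) volume 0 y := by
          have h1 : IntervalIntegrable (fun u : ℝ => (y - u) ^ (α-1)) volume 0 y := by
            have := (intervalIntegrable_rpow' (a := y) (b := 0) (by linarith : (-1:ℝ) < α - 1)).comp_sub_left y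
            simpa using this
          refine h1.continuousOn_mul ?_
          exact ((continuous_const.add continuous_id).rpow_const (fun u => Or.inr (by positivity))).continuousOn
        have hBle : (∫ u in (0:ℝ)..y, (x+u) ^ (α * k) * (y - u) ^ (α - 1))
            ≤ ∫ u in (0:ℝ)..y,
              (Real.Gamma (α*k+1) * ∑ i ∈ range (k+1), gml α i x * gml α (k-i) u) * (y-u)^(α-1) := by
          refine intervalIntegral.integral_mono_on hy.le hintB1 hintB2 ?_
          intro u hu
          have h1 : (x+u) ^ (α * k) ≤ Real.Gamma (α*k+1) * ∑ i ∈ range (k+1), gml α i x * gml α (k-i) u := by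
            have h2 := ih x hx u hu.1
            rw [gml] at h2
            have h3 := mul_le_mul_of_nonneg_left h2 hΓk.le
            rw [mul_div_cancel₀] at h3
            · exact h3
            · exact hΓk.ne'
          exact mul_le_mul_of_nonneg_right h1 (Real.rpow_nonneg (by linarith [hu.2]) _)
        -- B value
        have hBval : (∫ u in (0:ℝ)..y,
              (Real.Gamma (α*k+1) * ∑ i ∈ range (k+1), gml α i x * gml α (k-i) u) * (y-u)^(α-1))
            = Real.Gamma α * Real.Gamma (α*k+1) * ∑ i ∈ range (k+1), gml α i x * gml α ((k-i)+1) y := by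
          have hrw : (fun u : ℝ => (Real.Gamma (α*k+1) * ∑ i ∈ range (k+1), gml α i x * gml α (k-i) u) * (y-u)^(α-1))
              = fun u => ∑ i ∈ range (k+1),
                  (Real.Gamma (α*k+1) * gml α i x / Real.Gamma (α*(k-i:ℕ)+1)) * (u^(α*(k-i:ℕ)) * (y-u)^(α-1)) := by
            funext u
            rw [Finset.mul_sum, Finset.sum_mul]
            refine Finset.sum_congr rfl fun i hi => ?_
            simp only [gml]
            ring
          rw [hrw, intervalIntegral.integral_finset_sum (fun i _ =>
            (integrable_aux (by positivity) (by linarith)).const_mul _)]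
          rw [Finset.mul_sum]
          refine Finset.sum_congr rfl fun i hi => ?_
          rw [intervalIntegral.integral_const_mul, frac_int hα0 (k-i) hy]
          have hΓki : (0:ℝ) < Real.Gamma (α*(k-i:ℕ)+1) := Real.Gamma_pos_of_pos (by positivity)
          field_simp
        -- combine
        have hid : Real.Gamma α * Real.Gamma (α*k+1) * gml α (k+1) (x+y)
            = ∫ s in (0:ℝ)..(x+y), s ^ (α * k) * (x + y - s) ^ (α - 1) := (frac_int hα0 k hxy).symm
        have hidx : (∫ s in (0:ℝ)..x, s ^ (α * k) * (x - s) ^ (α - 1))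
            = Real.Gamma α * Real.Gamma (α*k+1) * gml α (k+1) x := frac_int hα0 k hx
        have hmain : Real.Gamma α * Real.Gamma (α*k+1) * gml α (k+1) (x+y)
            ≤ Real.Gamma α * Real.Gamma (α*k+1) *
              (gml α (k+1) x + ∑ i ∈ range (k+1), gml α i x * gml α ((k-i)+1) y) := by
          rw [hid, hsplit]
          rw [mul_add]
          gcongr ?_ + ?_
          · rw [← hidx]; exact hA
          · rw [← htrans] at *
            calc (∫ u in (0:ℝ)..y, (x+u) ^ (α * k) * (y - u) ^ (α - 1))
                ≤ _ := hBle
              _ = _ := hBval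
              _ = _ := by ring
        have hfin : gml α (k+1) (x+y)
            ≤ gml α (k+1) x + ∑ i ∈ range (k+1), gml α i x * gml α ((k-i)+1) y := by
          have hpos : 0 < Real.Gamma α * Real.Gamma (α*k+1) := mul_pos hΓα hΓk
          exact (mul_le_mul_iff_right₀ hpos).mp hmain
        refine hfin.trans (le_of_eq ?_)
        conv_rhs => rw [Finset.sum_range_succ, Nat.sub_self, gml_zero, mul_one]
        rw [add_comm (gml α (k+1) x)]
        congr 1
        refine Finset.sum_congr rfl fun i hi => ?_
        have h' : k + 1 - i = (k - i) + 1 := by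
          have := Finset.mem_range.mp hi
          omega
        rw [h']

lemma gamma_lb {α x : ℝ} (hα0 : 0 < α) (hα1 : α < 1) (hx : 1 ≤ x) :
    x ^ α / 2 * Real.Gamma x ≤ Real.Gamma (x + α) := by
  have hx0 : 0 < x := by linarith
  have hxα : 0 < x + α := by linarith
  have hΓx : 0 < Real.Gamma x := Real.Gamma_pos_of_pos hx0
  have hΓxα : 0 < Real.Gamma (x+α) := Real.Gamma_pos_of_pos hxα
  have hΓx1 : 0 < Real.Gamma (x+1) := Real.Gamma_pos_of_pos (by linarith)
  have hconv := Real.convexOn_log_Gamma.2 (Set.mem_Ioi.mpr hxα)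
    (Set.mem_Ioi.mpr (show (0:ℝ) < x+α+1 by linarith))
    (le_of_lt hα0) (by linarith : (0:ℝ) ≤ 1-α) (by ring)
  simp only [smul_eq_mul, Function.comp_apply] at hconv
  rw [show α * (x+α) + (1-α) * (x+α+1) = x + 1 by ring] at hconv
  rw [Real.Gamma_add_one hxα.ne', Real.log_mul hxα.ne' hΓxα.ne'] at hconv
  have hconv' : Real.log (Real.Gamma (x+1))
      ≤ Real.log (Real.Gamma (x+α)) + (1-α) * Real.log (x+α) := by
    nlinarith [hconv]
  have h3 : Real.Gamma (x+1) ≤ Real.Gamma (x+α) * (x+α)^(1-α) := by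
    have hrpos : 0 < Real.Gamma (x+α) * (x+α)^(1-α) :=
      mul_pos hΓxα (Real.rpow_pos_of_pos hxα _)
    rw [← Real.log_le_log_iff hΓx1 hrpos,
      Real.log_mul hΓxα.ne' (Real.rpow_pos_of_pos hxα _).ne', Real.log_rpow hxα]
    exact hconv'
  have h4 : (x+α)^(1-α) ≤ 2 * x^(1-α) := by
    calc (x+α)^(1-α) ≤ (2*x)^(1-α) :=
          Real.rpow_le_rpow hxα.le (by linarith) (by linarith)
      _ = 2^(1-α) * x^(1-α) := Real.mul_rpow (by norm_num) hx0.le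
      _ ≤ 2 * x^(1-α) := by
          have h5 : (2:ℝ)^(1-α) ≤ 2^(1:ℝ) :=
            Real.rpow_le_rpow_of_exponent_le (by norm_num) (by linarith)
          rw [Real.rpow_one] at h5
          exact mul_le_mul_of_nonneg_right h5 (Real.rpow_nonneg (by linarith) _)
  have h6 : x * Real.Gamma x ≤ Real.Gamma (x+α) * (2 * x^(1-α)) := by
    calc x * Real.Gamma x = Real.Gamma (x+1) := (Real.Gamma_add_one hx0.ne').symm
      _ ≤ Real.Gamma (x+α) * (x+α)^(1-α) := h3
      _ ≤ Real.Gamma (x+α) * (2 * x^(1-α)) := mul_le_mul_of_nonneg_left h4 hΓxα.le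
  have hxpow : x^α * x^(1-α) = x := by
    rw [← Real.rpow_add hx0]; norm_num
  have hx1α : 0 < x^(1-α) := Real.rpow_pos_of_pos hx0 _
  rw [div_mul_eq_mul_div, div_le_iff₀ (by norm_num : (0:ℝ) < 2)]
  have h7 := (mul_le_mul_iff_left₀ hx1α).mpr (le_refl (Real.Gamma (x+α)))
  nlinarith [h6, hxpow, hx1α, hΓx, hΓxα]


lemma summable_gml {α : ℝ} (hα0 : 0 < α) (hα1 : α < 1) {t : ℝ} (ht : 0 ≤ t) :
    Summable (fun k : ℕ => gml α k t) := by
  rcases ht.eq_or_lt with rfl | ht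
  · apply summable_of_ne_finset_zero (s := {0})
    intro k hk
    have hk0 : k ≠ 0 := by simpa using hk
    have : (0:ℝ) ^ (α * k) = 0 := by
      apply Real.zero_rpow
      have : (0:ℝ) < k := by exact_mod_cast Nat.pos_of_ne_zero hk0
      positivity
    simp [gml, this]
  · refine summable_of_ratio_norm_eventually_le (r := 1/2) (by norm_num) ?_
    have htend : Tendsto (fun k : ℕ => (α * k + 1)^α) atTop atTop := by
      apply (tendsto_rpow_atTop hα0).comp
      apply tendsto_atTop_add_const_right
      exact (tendsto_natCast_atTop_atTop).const_mul_atTop hα0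
    filter_upwards [htend.eventually_ge_atTop (4 * t^α)] with k hk
    have hxk : (1:ℝ) ≤ α * k + 1 := by
      have := mul_nonneg hα0.le (Nat.cast_nonneg (α := ℝ) k)
      linarith
    have hΓk : 0 < Real.Gamma (α * k + 1) := Real.Gamma_pos_of_pos (by positivity)
    have hΓk1 : 0 < Real.Gamma (α * (k+1:ℕ) + 1) := Real.Gamma_pos_of_pos (by positivity)
    have hlb := gamma_lb hα0 hα1 hxk
    have harg : α * (k+1:ℕ) + 1 = (α * k + 1) + α := by push_cast; ring
    have hta : 0 < t^α := Real.rpow_pos_of_pos ht _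
    have hlb2 : 2 * t^α * Real.Gamma (α * k + 1) ≤ Real.Gamma (α * (k+1:ℕ) + 1) := by
      rw [harg]
      calc 2 * t^α * Real.Gamma (α * k + 1)
          ≤ (α * k + 1)^α / 2 * Real.Gamma (α * k + 1) := by
            apply mul_le_mul_of_nonneg_right _ hΓk.le
            linarith
        _ ≤ Real.Gamma ((α * k + 1) + α) := gamma_lb hα0 hα1 hxk
    have hnum : t ^ (α * (k+1:ℕ)) = t ^ (α * k) * t ^ α := by
      rw [← Real.rpow_add ht]
      congr 1
      push_cast; ring
    rw [Real.norm_of_nonneg (gml_nonneg hα0 _ ht.le), Real.norm_of_nonneg (gml_nonneg hα0 _ ht.le)]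
    rw [gml, gml, hnum]
    rw [div_le_iff₀ hΓk1]
    calc t ^ (α * k) * t ^ α = (t ^ (α * k) / Real.Gamma (α * k + 1)) * (Real.Gamma (α * k + 1) * t^α) := by
          field_simp
      _ ≤ (t ^ (α * k) / Real.Gamma (α * k + 1)) * (Real.Gamma (α * (k+1:ℕ) + 1) / 2) := by
          apply mul_le_mul_of_nonneg_left _ (div_nonneg (Real.rpow_nonneg ht.le _) hΓk.le)
          linarith
      _ = 1 / 2 * (t ^ (α * ↑k) / Real.Gamma (α * ↑k + 1)) * Real.Gamma (α * ((k:ℕ)+1:ℕ) + 1) := by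
          ring

lemma rpow_strict_subadd {α x y : ℝ} (hα0 : 0 < α) (hα1 : α < 1) (hx : 0 < x) (hy : 0 < y) :
    (x+y)^α < x^α + y^α := by
  have hxy : 0 < x + y := by linarith
  have h1 : (x+y)^(α-1) < x^(α-1) := Real.rpow_lt_rpow_of_neg hx (by linarith) (by linarith)
  have h2 : (x+y)^(α-1) < y^(α-1) := Real.rpow_lt_rpow_of_neg hy (by linarith) (by linarith)
  have e : (x+y) * (x+y)^(α-1) = (x+y)^α := by
    rw [show (x+y) * (x+y)^(α-1) = (x+y)^(1:ℝ) * (x+y)^(α-1) by rw [Real.rpow_one],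
      ← Real.rpow_add hxy]
    norm_num
  have ex : x * x^(α-1) = x^α := by
    rw [show x * x^(α-1) = x^(1:ℝ) * x^(α-1) by rw [Real.rpow_one], ← Real.rpow_add hx]
    norm_num
  have ey : y * y^(α-1) = y^α := by
    rw [show y * y^(α-1) = y^(1:ℝ) * y^(α-1) by rw [Real.rpow_one], ← Real.rpow_add hy]
    norm_num
  nlinarith [mul_lt_mul_of_pos_left h1 hx, mul_lt_mul_of_pos_left h2 hy]


theorem mittagLeffler_strict_subadd (α x y : ℝ) (hα0 : 0 < α) (hα1 : α < 1)
    (hx : 0 < x) (hy : 0 < y) :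
    mittagLeffler α ((x + y) ^ α) < mittagLeffler α (x ^ α) * mittagLeffler α (y ^ α) := by
  have hteq : ∀ t : ℝ, 0 ≤ t → mittagLeffler α (t^α) = ∑' k, gml α k t := by
    intro t ht
    unfold mittagLeffler gml
    congr 1
    funext k
    rw [← Real.rpow_natCast (t^α) k, ← Real.rpow_mul ht]
  have hxy : 0 < x + y := by linarith
  have hnx : Summable (fun k => ‖gml α k x‖) := by
    have := summable_gml hα0 hα1 hx.le
    refine this.congr fun k => ?_
    exact (Real.norm_of_nonneg (gml_nonneg hα0 k hx.le)).symm
  have hny : Summable (fun k => ‖gml α k y‖) := by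
    have := summable_gml hα0 hα1 hy.le
    refine this.congr fun k => ?_
    exact (Real.norm_of_nonneg (gml_nonneg hα0 k hy.le)).symm
  have hprod : mittagLeffler α (x^α) * mittagLeffler α (y^α)
      = ∑' n, ∑ i ∈ range (n+1), gml α i x * gml α (n-i) y := by
    rw [hteq x hx.le, hteq y hy.le]
    exact tsum_mul_tsum_eq_tsum_sum_range_of_summable_norm hnx hny
  rw [hteq (x+y) hxy.le, hprod]
  refine Summable.tsum_lt_tsum_of_nonneg (i := 1)
    (fun k => gml_nonneg hα0 k hxy.le)
    (fun k => key hα0 hα1 k x hx y hy.le) ?_ ?_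
  · -- strict at k = 1
    have hΓ : 0 < Real.Gamma (α * (1:ℕ) + 1) := Real.Gamma_pos_of_pos (by push_cast; linarith)
    rw [show range (1+1) = {0, 1} from rfl]
    rw [Finset.sum_insert (by simp), Finset.sum_singleton]
    rw [gml_zero, Nat.sub_self, gml_zero, mul_one, one_mul]
    rw [gml, gml, gml]
    rw [← add_div, div_lt_div_iff₀ hΓ hΓ]
    have hsub : (x+y)^(α * (1:ℕ)) < y^(α * (1:ℕ)) + x^(α * (1:ℕ)) := by
      have : (α : ℝ) * (1:ℕ) = α := by norm_num
      rw [this]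
      have := rpow_strict_subadd hα0 hα1 hx hy
      linarith
    nlinarith [hΓ, hsub]
  · exact (summable_norm_sum_mul_range_of_summable_norm hnx hny).of_norm
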